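/- arXiv:1310.4724 — 8 statements merged into one kernel-verified Lean document; each statement's English description precedes it below -/
import Mathlib

section
/- Let v = e^{2πi/3}, 0 < λ < 1, and define f_C(z) = 1 + λ(1+v)z and f_E(z) = -v - λvz on ℂ. If z = λ⁻¹v + av + b(1+v) with a, b > 0, then f_E(z) = 1 + λa(1+v) + λb. In particular, f_E maps the region E = {λ⁻¹v + av + b(1+v) : a,b > 0} into the set {α + β(1+v) : α > 1, β > 0}. -/
theorem stmt7 (lam : ℝ) (h0 : 0 < lam) (h1 : lam < 1)
    (v : ℂ) (hv : v = Complex.exp (2 * Real.pi * Complex.I / 3))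
    (fE : ℂ → ℂ) (hfE : ∀ z, fE z = -v - (lam : ℂ) * v * z) :
    (∀ a b : ℝ, 0 < a → 0 < b →
      fE ((lam : ℂ)⁻¹ * v + (a : ℂ) * v + (b : ℂ) * (1 + v)) =
        1 + (lam : ℂ) * (a : ℂ) * (1 + v) + (lam : ℂ) * (b : ℂ)) ∧
    (∀ z : ℂ, (∃ a b : ℝ, 0 < a ∧ 0 < b ∧
        z = (lam : ℂ)⁻¹ * v + (a : ℂ) * v + (b : ℂ) * (1 + v)) →
      ∃ α β : ℝ, 1 < α ∧ 0 < β ∧ fE z = (α : ℂ) + (β : ℂ) * (1 + v)) := by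
  have hl : (lam : ℂ) ≠ 0 := by exact_mod_cast h0.ne'
  have hinv : (lam : ℂ) * (lam : ℂ)⁻¹ = 1 := mul_inv_cancel₀ hl
  have hv3 : v ^ 3 = 1 := by
    rw [hv, ← Complex.exp_nat_mul]
    rw [show (3 : ℕ) * (2 * (Real.pi : ℂ) * Complex.I / 3) = 2 * Real.pi * Complex.I by
      push_cast; ring]
    exact Complex.exp_two_pi_mul_I
  have hv1 : v ≠ 1 := by
    rw [hv]
    intro h
    rw [Complex.exp_eq_one_iff] at h
    obtain ⟨n, hn⟩ := h
    have hpi : (Real.pi : ℂ) ≠ 0 := by exact_mod_cast Real.pi_ne_zero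
    have : (n : ℂ) * 3 = 1 := by
      field_simp at hn
      have := mul_right_cancel₀ (mul_ne_zero hpi Complex.I_ne_zero)
        (by linear_combination (-((Real.pi : ℂ) * Complex.I)) * hn :
          (n : ℂ) * 3 * ((Real.pi : ℂ) * Complex.I) = 1 * ((Real.pi : ℂ) * Complex.I))
      exact this
    have : ((n * 3 : ℤ) : ℂ) = ((1 : ℤ) : ℂ) := by push_cast; linear_combination this
    have h3 : (n * 3 : ℤ) = 1 := by exact_mod_cast this
    omega
  have hq : v ^ 2 + v + 1 = 0 := by
    have : (v - 1) * (v ^ 2 + v + 1) = 0 := by linear_combination hv3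
    rcases mul_eq_zero.mp this with h | h
    · exact absurd (sub_eq_zero.mp h) hv1
    · exact h
  have key : ∀ a b : ℝ, fE ((lam : ℂ)⁻¹ * v + (a : ℂ) * v + (b : ℂ) * (1 + v)) =
      1 + (lam : ℂ) * (a : ℂ) * (1 + v) + (lam : ℂ) * (b : ℂ) := by
    intro a b
    rw [hfE]
    linear_combination (-(1 : ℂ) - (lam : ℂ) * a - (lam : ℂ) * b) * hq + (-(v ^ 2)) * hinv
  refine ⟨fun a b _ _ => key a b, ?_⟩
  rintro z ⟨a, b, ha, hb, rfl⟩
  refine ⟨1 + lam * b, lam * a, by nlinarith, by positivity, ?_⟩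
  rw [key a b]; push_cast; ring
end

section
/- Let v = e^{2πi/3}, 0 < λ < 1, f_C(z) = 1 + λ(1+v)z, f_E(z) = -v - λvz. Write z = a + b(1+v) (a, b real). If a > -λ⁻¹ and b > λ⁻¹ + λ⁻², then f_E(f_C(z)) = α + β(1+v) with α = 1 + λ + aλ² and β = λ²b - λ - 1. Consequently, if additionally λ⁻¹+⋯+λ^{-2n+2} < b < λ⁻¹+⋯+λ^{-2n} for some n ≥ 2, then α > 1 and λ⁻¹+⋯+λ^{-2n+4} < β < λ⁻¹+⋯+λ^{-2n+2} (i.e., f²(C_n) ⊂ C_{n-1}). -/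
lemma sum_shift (lam : ℝ) (h0 : lam ≠ 0) : ∀ m : ℕ, 2 ≤ m →
    lam ^ 2 * (∑ j ∈ Finset.Icc 1 m, lam⁻¹ ^ j) - lam - 1 =
      ∑ j ∈ Finset.Icc 1 (m - 2), lam⁻¹ ^ j := by
  intro m hm
  induction m with
  | zero => omega
  | succ k ih =>
    rcases Nat.lt_or_ge k 2 with hk | hk
    · interval_cases k
      · omega
      · -- m = 2
        rw [show Finset.Icc 1 2 = {1, 2} from rfl]
        simp
        field_simp
        ring
    · have h3 : 3 ≤ k + 1 := by omega
      rw [Finset.sum_Icc_succ_top (by omega), mul_add, show k + 1 - 2 = (k - 2) + 1 by omega,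
        Finset.sum_Icc_succ_top (by omega : 1 ≤ k - 2 + 1)]
      have : lam ^ 2 * lam⁻¹ ^ (k + 1) = lam⁻¹ ^ (k - 2 + 1) := by
        rw [show k + 1 = (k - 2 + 1) + 2 by omega, pow_add]
        field_simp
      rw [this]
      have := ih hk
      linarith

theorem stmt8 (lam : ℝ) (h0 : 0 < lam) (h1 : lam < 1)
    (v : ℂ) (hv : v = Complex.exp (2 * Real.pi * Complex.I / 3))
    (fC : ℂ → ℂ) (hfC : ∀ z, fC z = 1 + (lam : ℂ) * (1 + v) * z)
    (fE : ℂ → ℂ) (hfE : ∀ z, fE z = -v - (lam : ℂ) * v * z)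
    (a b : ℝ) (ha : -lam⁻¹ < a) (hb : lam⁻¹ + lam⁻¹ ^ 2 < b) :
    fE (fC ((a : ℂ) + (b : ℂ) * (1 + v))) =
      ((1 + lam + a * lam ^ 2 : ℝ) : ℂ) + ((lam ^ 2 * b - lam - 1 : ℝ) : ℂ) * (1 + v) ∧
    (∀ n : ℕ, 2 ≤ n →
      (∑ j ∈ Finset.Icc 1 (2 * n - 2), lam⁻¹ ^ j) < b →
      b < (∑ j ∈ Finset.Icc 1 (2 * n), lam⁻¹ ^ j) →
      1 < 1 + lam + a * lam ^ 2 ∧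
      (∑ j ∈ Finset.Icc 1 (2 * n - 4), lam⁻¹ ^ j) < lam ^ 2 * b - lam - 1 ∧
      lam ^ 2 * b - lam - 1 < ∑ j ∈ Finset.Icc 1 (2 * n - 2), lam⁻¹ ^ j) := by
  have hlam0 : lam ≠ 0 := ne_of_gt h0
  -- v^3 = 1
  have hcube : v ^ 3 = 1 := by
    rw [hv, ← Complex.exp_nat_mul]
    rw [show ((3 : ℕ) : ℂ) * (2 * (Real.pi : ℂ) * Complex.I / 3) = 2 * Real.pi * Complex.I by
      push_cast; ring]
    exact Complex.exp_two_pi_mul_I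
  have hne : v ≠ 1 := by
    intro h
    have hre : v.re = Real.cos (2 * Real.pi / 3) := by
      rw [hv, show (2 : ℂ) * Real.pi * Complex.I / 3 = ((2 * Real.pi / 3 : ℝ) : ℂ) * Complex.I by
        push_cast; ring]
      exact Complex.exp_ofReal_mul_I_re _
    have hcos : Real.cos (2 * Real.pi / 3) = -(1/2) := by
      rw [show 2 * Real.pi / 3 = Real.pi - Real.pi / 3 by ring, Real.cos_pi_sub,
        Real.cos_pi_div_three]
    rw [h] at hre
    simp [hcos] at hre
    norm_num at hre
  have hv3 : v ^ 2 + v + 1 = 0 := by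
    have : (v - 1) * (v ^ 2 + v + 1) = 0 := by
      have : v ^ 3 - 1 = 0 := by rw [hcube]; ring
      linear_combination this
    rcases mul_eq_zero.mp this with h | h
    · exact (hne (sub_eq_zero.mp h)).elim
    · exact h
  constructor
  · rw [hfC, hfE]
    push_cast
    linear_combination (-(lam:ℂ)^2 * (a + b + b * v)) * hv3
  · intro n hn hlo hhi
    have key2n := sum_shift lam hlam0 (2 * n) (by omega)
    have key2n2 := sum_shift lam hlam0 (2 * n - 2) (by omega)
    have h2 : (0:ℝ) < lam ^ 2 := by positivity
    refine ⟨?_, ?_, ?_⟩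
    · nlinarith [mul_lt_mul_of_pos_right ha h2, (by field_simp : -lam⁻¹ * lam ^ 2 = -lam)]
    · rw [show 2 * n - 4 = 2 * n - 2 - 2 by omega] at *
      nlinarith [mul_lt_mul_of_pos_right hlo h2]
    · rw [show 2 * n - 2 = 2 * n - 2 by rfl]
      have := mul_lt_mul_of_pos_right hhi h2
      nlinarith
end

section
/- Let v = e^{2πi/3}, 0 < λ < 1, and f_C(z) = 1 + λ(1+v)z. If z = a + b(1+v) with a > -λ⁻¹, a + b > 0 and 0 < b < λ⁻¹ + λ⁻², then f_C(z) = α + β(1+v) with α = 1 - λb and β = λ(a+b); moreover -λ⁻¹ < α < 1, β > 0 and α + β > 0. -/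
theorem stmt9 (lam : ℝ) (h0 : 0 < lam) (h1 : lam < 1)
    (v : ℂ) (hv : v = Complex.exp (2 * Real.pi * Complex.I / 3))
    (fC : ℂ → ℂ) (hfC : ∀ z, fC z = 1 + (lam : ℂ) * (1 + v) * z)
    (a b : ℝ) (ha : -lam⁻¹ < a) (hab : 0 < a + b)
    (hb0 : 0 < b) (hb1 : b < lam⁻¹ + lam⁻¹ ^ 2) :
    fC ((a : ℂ) + (b : ℂ) * (1 + v)) =
      ((1 - lam * b : ℝ) : ℂ) + ((lam * (a + b) : ℝ) : ℂ) * (1 + v) ∧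
    -lam⁻¹ < 1 - lam * b ∧ 1 - lam * b < 1 ∧ 0 < lam * (a + b) ∧
    0 < (1 - lam * b) + lam * (a + b) := by
  have hprim : IsPrimitiveRoot v 3 := by
    rw [hv]
    have := Complex.isPrimitiveRoot_exp 3 (by norm_num)
    simpa using this
  have hv3 : v ^ 3 = 1 := hprim.pow_eq_one
  have hvne : v ≠ 1 := hprim.ne_one (by norm_num)
  have hq : v ^ 2 + v + 1 = 0 := by
    have hfac : (v - 1) * (v ^ 2 + v + 1) = 0 := by ring_nf; linear_combination hv3
    rcases mul_eq_zero.1 hfac with h | h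
    · exact absurd (sub_eq_zero.1 h) hvne
    · exact h
  have hli : lam * lam⁻¹ = 1 := mul_inv_cancel₀ h0.ne'
  refine ⟨?_, ?_, ?_, ?_, ?_⟩
  · rw [hfC]
    push_cast
    linear_combination (lam * b : ℂ) * hq
  · nlinarith [mul_lt_mul_of_pos_left hb1 h0, mul_pos h0 (inv_pos.2 h0), sq_nonneg lam⁻¹]
  · nlinarith [mul_pos h0 hb0]
  · positivity
  · nlinarith [mul_lt_mul_of_pos_left ha h0]
end

section
/- For every integer n ≥ 1, the polynomial p_{2n-1}(x) = 1 - x^{2n-2} - x^{2n-1} + x^{4n-2} satisfies: the fixed point z_n of ψ_n lies in B_n if and only if p_{2n-1}(λ) < 0; equivalently, λ²(1 - λ^{2n-2}) < λ^{4n-1}(1-λ^{2n-1})/(1 - λ^{2n-1} + λ^{4n-2}) holds iff 1 - λ^{2n-2} - λ^{2n-1} + λ^{4n-2} < 0. Moreover the inequality λ^{4n-1}(1-λ^{2n-1})/(1-λ^{2n-1}+λ^{4n-2}) < 1 - λ^{2n} holds for all λ ∈ (0,1). -/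
theorem stmt12 (lam : ℝ) (h0 : 0 < lam) (h1 : lam < 1) (n : ℕ) (hn : 1 ≤ n)
    (s : ℝ) (hsdef : s = (lam ^ (2 * n - 2) - lam ^ (4 * n - 3)) /
      ((1 - lam) * (1 - lam ^ (2 * n - 1) + lam ^ (4 * n - 2))))
    (frac : ℝ) (hfrac : frac = lam ^ (4 * n - 1) * (1 - lam ^ (2 * n - 1)) /
      (1 - lam ^ (2 * n - 1) + lam ^ (4 * n - 2))) :
    (((∑ j ∈ Finset.Icc 2 (2 * n - 1), lam⁻¹ ^ j) < s ∧
        s < ∑ j ∈ Finset.Icc 2 (2 * n + 1), lam⁻¹ ^ j) ↔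
      1 - lam ^ (2 * n - 2) - lam ^ (2 * n - 1) + lam ^ (4 * n - 2) < 0) ∧
    ((lam ^ 2 * (1 - lam ^ (2 * n - 2)) < frac) ↔
      1 - lam ^ (2 * n - 2) - lam ^ (2 * n - 1) + lam ^ (4 * n - 2) < 0) ∧
    frac < 1 - lam ^ (2 * n) := by
  obtain ⟨k, rfl⟩ := Nat.exists_eq_add_of_le hn
  simp only [show 2 * (1 + k) - 2 = 2 * k from by omega,
    show 2 * (1 + k) - 1 = 2 * k + 1 from by omega,
    show 4 * (1 + k) - 3 = 4 * k + 1 from by omega,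
    show 4 * (1 + k) - 2 = 4 * k + 2 from by omega,
    show 4 * (1 + k) - 1 = 4 * k + 3 from by omega,
    show 2 * (1 + k) = 2 * k + 2 from by omega,
    show 2 * (1 + k) + 1 = 2 * k + 3 from by omega,
    show 2 * k + 2 - 2 = 2 * k from by omega,
    show 2 * k + 2 - 1 = 2 * k + 1 from by omega,
    show 2 * k + 2 + 1 = 2 * k + 3 from by omega] at hsdef hfrac ⊢
  subst hsdef hfrac
  have hne : lam ≠ 0 := ne_of_gt h0
  have ha1 : lam ^ (2 * k + 1) < 1 := pow_lt_one₀ h0.le h1 (by omega)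
  have ha0 : (0:ℝ) < lam ^ (2 * k + 1) := pow_pos h0 _
  have hD : (0:ℝ) < 1 - lam ^ (2 * k + 1) + lam ^ (4 * k + 2) := by
    nlinarith [pow_pos h0 (4 * k + 2)]
  have h1l : (0:ℝ) < 1 - lam := by linarith
  have hden : 0 < (1 - lam) * (1 - lam ^ (2 * k + 1) + lam ^ (4 * k + 2)) := mul_pos h1l hD
  -- key inequality (part C)
  have hC : lam ^ (4 * k + 3) * (1 - lam ^ (2 * k + 1)) <
      (1 - lam ^ (2 * k + 2)) * (1 - lam ^ (2 * k + 1) + lam ^ (4 * k + 2)) := by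
    have e1 : lam ^ (4 * k + 2) = (lam ^ (2 * k + 1)) ^ 2 := by
      rw [show 4 * k + 2 = (2 * k + 1) * 2 from by omega, pow_mul]
    have e2 : lam ^ (4 * k + 3) = lam * (lam ^ (2 * k + 1)) ^ 2 := by
      rw [show 4 * k + 3 = (2 * k + 1) * 2 + 1 from by omega, pow_succ', pow_mul]
    have e3 : lam ^ (2 * k + 2) = lam * lam ^ (2 * k + 1) := by
      rw [show 2 * k + 2 = (2 * k + 1) + 1 from by omega, pow_succ']
    rw [e1, e2, e3]
    have hla : lam * lam ^ (2 * k + 1) < 1 := by nlinarith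
    nlinarith [mul_pos (sub_pos.mpr ha1) (sub_pos.mpr hla),
      mul_pos (mul_pos ha0 ha0) h1l]
  have hkey : ∀ c p : ℝ, 0 < c → (c * p < 0 ↔ p < 0) := by
    intro c p hc
    constructor
    · intro h
      by_contra hp
      push_neg at hp
      exact absurd h (not_lt.mpr (mul_nonneg hc.le hp))
    · intro h
      exact mul_neg_of_pos_of_neg hc h
  have hti : (1:ℝ) < lam⁻¹ := (one_lt_inv₀ h0).mpr h1
  have htpos : (0:ℝ) < lam⁻¹ - 1 := sub_pos.mpr hti
  have ht1 : lam⁻¹ ≠ (1:ℝ) := ne_of_gt hti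
  have hS1 : ∑ j ∈ Finset.Icc 2 (2 * k + 1), lam⁻¹ ^ j =
      (lam⁻¹ ^ (2 * k + 2) - lam⁻¹ ^ 2) / (lam⁻¹ - 1) := by
    rw [← Finset.Ico_add_one_right_eq_Icc, geom_sum_Ico ht1 (by omega)]
    ring
  have hS2 : ∑ j ∈ Finset.Icc 2 (2 * k + 3), lam⁻¹ ^ j =
      (lam⁻¹ ^ (2 * k + 4) - lam⁻¹ ^ 2) / (lam⁻¹ - 1) := by
    rw [← Finset.Ico_add_one_right_eq_Icc, geom_sum_Ico ht1 (by omega)]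
    ring
  have hlow : (∑ j ∈ Finset.Icc 2 (2 * k + 1), lam⁻¹ ^ j) <
      (lam ^ (2 * k) - lam ^ (4 * k + 1)) /
        ((1 - lam) * (1 - lam ^ (2 * k + 1) + lam ^ (4 * k + 2))) ↔
      1 - lam ^ (2 * k) - lam ^ (2 * k + 1) + lam ^ (4 * k + 2) < 0 := by
    rw [hS1, div_lt_div_iff₀ htpos hden]
    rw [← mul_lt_mul_iff_of_pos_right (pow_pos h0 (2 * k + 2))]
    have eL : (lam⁻¹ ^ (2 * k + 2) - lam⁻¹ ^ 2) *
        ((1 - lam) * (1 - lam ^ (2 * k + 1) + lam ^ (4 * k + 2))) * lam ^ (2 * k + 2) =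
        (1 - lam ^ (2 * k)) * ((1 - lam) * (1 - lam ^ (2 * k + 1) + lam ^ (4 * k + 2))) := by
      rw [inv_pow, inv_pow]
      field_simp
      ring
    have eR : (lam ^ (2 * k) - lam ^ (4 * k + 1)) * (lam⁻¹ - 1) * lam ^ (2 * k + 2) =
        (lam ^ (2 * k) - lam ^ (4 * k + 1)) * (lam ^ (2 * k + 1) - lam ^ (2 * k + 2)) := by
      field_simp
      ring
    rw [eL, eR]
    have hid : (1 - lam ^ (2 * k)) * ((1 - lam) * (1 - lam ^ (2 * k + 1) + lam ^ (4 * k + 2))) -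
        (lam ^ (2 * k) - lam ^ (4 * k + 1)) * (lam ^ (2 * k + 1) - lam ^ (2 * k + 2)) =
        (1 - lam) * (1 - lam ^ (2 * k) - lam ^ (2 * k + 1) + lam ^ (4 * k + 2)) := by
      ring
    rw [← sub_neg, hid, hkey _ _ h1l]
  have hup : (lam ^ (2 * k) - lam ^ (4 * k + 1)) /
        ((1 - lam) * (1 - lam ^ (2 * k + 1) + lam ^ (4 * k + 2))) <
      ∑ j ∈ Finset.Icc 2 (2 * k + 3), lam⁻¹ ^ j := by
    rw [hS2, div_lt_div_iff₀ hden htpos]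
    rw [← mul_lt_mul_iff_of_pos_right (pow_pos h0 (2 * k + 4))]
    have eL : (lam ^ (2 * k) - lam ^ (4 * k + 1)) * (lam⁻¹ - 1) * lam ^ (2 * k + 4) =
        (lam ^ (2 * k) - lam ^ (4 * k + 1)) * (lam ^ (2 * k + 3) - lam ^ (2 * k + 4)) := by
      field_simp
      ring
    have eR : (lam⁻¹ ^ (2 * k + 4) - lam⁻¹ ^ 2) *
        ((1 - lam) * (1 - lam ^ (2 * k + 1) + lam ^ (4 * k + 2))) * lam ^ (2 * k + 4) =
        (1 - lam ^ (2 * k + 2)) * ((1 - lam) * (1 - lam ^ (2 * k + 1) + lam ^ (4 * k + 2))) := by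
      rw [inv_pow, inv_pow]
      field_simp
      ring
    rw [eL, eR]
    have hid : (1 - lam ^ (2 * k + 2)) * ((1 - lam) * (1 - lam ^ (2 * k + 1) + lam ^ (4 * k + 2))) -
        (lam ^ (2 * k) - lam ^ (4 * k + 1)) * (lam ^ (2 * k + 3) - lam ^ (2 * k + 4)) =
        (1 - lam) * ((1 - lam ^ (2 * k + 2)) * (1 - lam ^ (2 * k + 1) + lam ^ (4 * k + 2)) -
          lam ^ (4 * k + 3) * (1 - lam ^ (2 * k + 1))) := by
      ring
    linarith [hid, mul_pos h1l (sub_pos.mpr hC)]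
  refine ⟨⟨fun h => hlow.mp h.1, fun h => ⟨hlow.mpr h, hup⟩⟩, ?_, ?_⟩
  · rw [lt_div_iff₀ hD]
    have hid : lam ^ 2 * (1 - lam ^ (2 * k)) * (1 - lam ^ (2 * k + 1) + lam ^ (4 * k + 2)) -
        lam ^ (4 * k + 3) * (1 - lam ^ (2 * k + 1)) =
        lam ^ 2 * (1 - lam ^ (2 * k) - lam ^ (2 * k + 1) + lam ^ (4 * k + 2)) := by
      ring
    rw [← sub_neg, hid, hkey _ _ (pow_pos h0 2)]
  · rw [div_lt_iff₀ hD]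
    exact hC
end

section
/- For each n ≥ 1, the polynomial p_n(x) = x^{2n} - xⁿ - x^{n-1} + 1 has exactly one root λ_n in [0,1); moreover p_n(x) < 0 for all x ∈ (λ_n, 1), the sequence (λ_n) is strictly increasing, and λ_n → 1 as n → ∞. -/
open Finset

-- cross term inequality
lemma cross15 {a b : ℝ} (ha : 0 < a) (hab : a < b) {i k : ℕ} (hk : k < i) :
    a ^ i * b ^ k < b ^ i * a ^ k := by
  have hb : 0 < b := ha.trans hab
  have h : a ^ (i - k) < b ^ (i - k) := pow_lt_pow_left₀ hab ha.le (by omega)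
  have hi : i = k + (i - k) := by omega
  rw [hi, pow_add, pow_add]
  have hc : 0 < a ^ k * b ^ k := mul_pos (pow_pos ha k) (pow_pos hb k)
  nlinarith [mul_lt_mul_of_pos_left h hc]

-- key cross inequality in geometric-sum form
lemma keyS15 (n : ℕ) (hn : 2 ≤ n) {a b : ℝ} (ha : 0 < a) (hab : a < b) :
    a ^ n * ((∑ j ∈ range n, a ^ j) * ∑ k ∈ range (n - 1), b ^ k) <
    b ^ n * ((∑ j ∈ range n, b ^ j) * ∑ k ∈ range (n - 1), a ^ k) := by
  have L : ∀ c d : ℝ, c ^ n * ((∑ j ∈ range n, c ^ j) * ∑ k ∈ range (n - 1), d ^ k)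
      = ∑ j ∈ range n, ∑ k ∈ range (n - 1), c ^ (n + j) * d ^ k := by
    intro c d
    rw [Finset.sum_mul_sum, Finset.mul_sum]
    refine sum_congr rfl fun j _ => ?_
    rw [Finset.mul_sum]
    refine sum_congr rfl fun k _ => ?_
    rw [pow_add]; ring
  rw [L, L]
  refine Finset.sum_lt_sum_of_nonempty ⟨0, mem_range.2 (by omega)⟩ fun j hj => ?_
  refine Finset.sum_lt_sum_of_nonempty ⟨0, mem_range.2 (by omega)⟩ fun k hk => ?_
  have hk' : k < n - 1 := mem_range.mp hk
  exact cross15 ha hab (by omega)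

lemma gs15 (x : ℝ) (m : ℕ) : (1 - x) * ∑ k ∈ range m, x ^ k = 1 - x ^ m := by
  linear_combination (-1 : ℝ) * geom_sum_mul x m

-- key inequality : F a * G b < F b * G a
lemma keyFG15 (n : ℕ) (hn : 2 ≤ n) {a b : ℝ} (ha : 0 < a) (hab : a < b) (hb : b < 1) :
    a ^ n * (1 - a ^ n) * (1 - b ^ (n - 1)) < b ^ n * (1 - b ^ n) * (1 - a ^ (n - 1)) := by
  have e1 := gs15 a n
  have e2 := gs15 b n
  have e3 := gs15 a (n - 1)
  have e4 := gs15 b (n - 1)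
  have hpos : 0 < (1 - a) * (1 - b) :=
    mul_pos (by linarith) (by linarith)
  have h := mul_lt_mul_of_pos_left (keyS15 n hn ha hab) hpos
  calc a ^ n * (1 - a ^ n) * (1 - b ^ (n - 1))
      = (1 - a) * (1 - b) * (a ^ n * ((∑ j ∈ range n, a ^ j) * ∑ k ∈ range (n - 1), b ^ k)) := by
        rw [← e1, ← e4]; ring
    _ < (1 - a) * (1 - b) * (b ^ n * ((∑ j ∈ range n, b ^ j) * ∑ k ∈ range (n - 1), a ^ k)) := h
    _ = b ^ n * (1 - b ^ n) * (1 - a ^ (n - 1)) := by rw [← e2, ← e3]; ring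

-- key inequality 2 : F_{n+1} x * G_n x < F_n x * G_{n+1} x
lemma key2FG15 (n : ℕ) (hn : 2 ≤ n) {x : ℝ} (hx0 : 0 < x) (hx1 : x < 1) :
    x ^ (n + 1) * (1 - x ^ (n + 1)) * (1 - x ^ (n - 1)) <
    x ^ n * (1 - x ^ n) * (1 - x ^ n) := by
  obtain ⟨m, rfl⟩ : ∃ m, n = m + 2 := ⟨n - 2, by omega⟩
  have hid : (1 - x ^ (m + 2)) ^ 2
      = (1 - x ^ (m + 3)) * (1 - x ^ (m + 1)) + x ^ (m + 1) * (1 - x) ^ 2 := by ring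
  have h1 : 0 < 1 - x ^ (m + 3) := by
    have := pow_lt_one₀ hx0.le hx1 (n := m + 3) (by omega); linarith
  have h2 : 0 < 1 - x ^ (m + 1) := by
    have := pow_lt_one₀ hx0.le hx1 (n := m + 1) (by omega); linarith
  have h3 : 0 < x ^ (m + 2) := pow_pos hx0 _
  have h4 : 0 < x ^ (m + 1) := pow_pos hx0 _
  have key : x ^ (m + 2 + 1) * ((1 - x ^ (m + 3)) * (1 - x ^ (m + 1)))
      < x ^ (m + 2) * ((1 - x ^ (m + 3)) * (1 - x ^ (m + 1))) := by
    apply mul_lt_mul_of_pos_right _ (mul_pos h1 h2)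
    exact pow_lt_pow_right_of_lt_one₀ hx0 hx1 (by omega)
  have h5 : 0 < x ^ (m + 2) * (x ^ (m + 1) * (1 - x) ^ 2) :=
    mul_pos h3 (mul_pos h4 (pow_pos (by linarith) 2))
  show x ^ (m + 2 + 1) * (1 - x ^ (m + 2 + 1)) * (1 - x ^ (m + 2 - 1)) < _
  have e1 : m + 2 + 1 = m + 3 := by omega
  have e2 : m + 2 - 1 = m + 1 := by omega
  rw [e1, e2]
  nlinarith [key, h5, hid]

lemma pFG15 (n : ℕ) (x : ℝ) :
    x ^ (2 * n) - x ^ n - x ^ (n - 1) + 1 = (1 - x ^ (n - 1)) - x ^ n * (1 - x ^ n) := by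
  rw [two_mul, pow_add]; ring

lemma p0_15 (n : ℕ) (hn : 2 ≤ n) :
    (0 : ℝ) ^ (2 * n) - (0 : ℝ) ^ n - (0 : ℝ) ^ (n - 1) + 1 = 1 := by
  rw [zero_pow (by omega), zero_pow (by omega), zero_pow (by omega)]; ring

-- sign lemma: if l is a root in (0,1) then p < 0 on (l,1)
lemma sign15 (n : ℕ) (hn : 2 ≤ n) {l x : ℝ} (hl0 : 0 < l) (hl1 : l < 1)
    (hpl : l ^ (2 * n) - l ^ n - l ^ (n - 1) + 1 = 0)
    (hx : l < x) (hx1 : x < 1) :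
    x ^ (2 * n) - x ^ n - x ^ (n - 1) + 1 < 0 := by
  have h1 := keyFG15 n hn hl0 hx hx1
  have h2 : l ^ n * (1 - l ^ n) = 1 - l ^ (n - 1) := by
    have := pFG15 n l; rw [hpl] at this; linarith
  have hGl : 0 < 1 - l ^ (n - 1) := by
    have := pow_lt_one₀ hl0.le hl1 (n := n - 1) (by omega); linarith
  rw [h2] at h1
  rw [pFG15]
  nlinarith [h1, hGl]

-- uniqueness of roots in [0,1)  (n ≥ 2)
lemma uniq15 (n : ℕ) (hn : 2 ≤ n) {a b : ℝ} (ha : a ∈ Set.Ico (0:ℝ) 1) (hb : b ∈ Set.Ico (0:ℝ) 1)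
    (hpa : a ^ (2 * n) - a ^ n - a ^ (n - 1) + 1 = 0)
    (hpb : b ^ (2 * n) - b ^ n - b ^ (n - 1) + 1 = 0) : a = b := by
  have h0 : ∀ c : ℝ, c ∈ Set.Ico (0:ℝ) 1 → c ^ (2 * n) - c ^ n - c ^ (n - 1) + 1 = 0 → 0 < c := by
    intro c hc hpc
    rcases hc.1.lt_or_eq with h | h
    · exact h
    · rw [← h] at hpc; rw [p0_15 n hn] at hpc; norm_num at hpc
  have key : ∀ c d : ℝ, c ∈ Set.Ico (0:ℝ) 1 → d ∈ Set.Ico (0:ℝ) 1 →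
      c ^ (2 * n) - c ^ n - c ^ (n - 1) + 1 = 0 →
      d ^ (2 * n) - d ^ n - d ^ (n - 1) + 1 = 0 → ¬ (c < d) := by
    intro c d hc hd hpc hpd hlt
    have hFc : c ^ n * (1 - c ^ n) = 1 - c ^ (n - 1) := by
      have := pFG15 n c; rw [hpc] at this; linarith
    have hFd : d ^ n * (1 - d ^ n) = 1 - d ^ (n - 1) := by
      have := pFG15 n d; rw [hpd] at this; linarith
    have h := keyFG15 n hn (h0 c hc hpc) hlt hd.2
    rw [hFc, hFd] at h
    nlinarith [h]
  rcases lt_trichotomy a b with h | h | h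
  · exact absurd h (key a b ha hb hpa hpb)
  · exact h
  · exact absurd h (key b a hb ha hpb hpa)

-- existence of a root in (0,1) for n ≥ 2
lemma exist15 (n : ℕ) (hn : 2 ≤ n) :
    ∃ x : ℝ, x ∈ Set.Ico (0:ℝ) 1 ∧ x ^ (2 * n) - x ^ n - x ^ (n - 1) + 1 = 0 := by
  set q : ℝ → ℝ := fun x => (∑ k ∈ range (n - 1), x ^ k) - x ^ n * ∑ k ∈ range n, x ^ k with hq
  have hcont : ContinuousOn q (Set.Icc (0:ℝ) 1) := by
    apply Continuous.continuousOn
    apply Continuous.sub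
    · exact continuous_finset_sum _ fun i _ => continuous_pow i
    · exact (continuous_pow n).mul (continuous_finset_sum _ fun i _ => continuous_pow i)
  have hq0 : q 0 = 1 := by
    simp only [hq, zero_geom_sum, zero_pow (by omega : n ≠ 0)]
    rw [if_neg (by omega : ¬ (n - 1 = 0))]; ring
  have hq1 : q 1 = -1 := by
    simp only [hq, one_pow, Finset.sum_const, nsmul_eq_mul, mul_one, card_range]
    have h1 : (1:ℝ) ≤ n := by exact_mod_cast Nat.one_le_iff_ne_zero.2 (by omega)
    have : ((n - 1 : ℕ) : ℝ) = (n : ℝ) - 1 := by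
      push_cast [Nat.cast_sub (by omega : 1 ≤ n)]; ring
    rw [this]; ring
  have h0 : (0:ℝ) ∈ Set.Ioo (q 1) (q 0) := by rw [hq0, hq1]; constructor <;> norm_num
  obtain ⟨x, hx, hqx⟩ := intermediate_value_Ioo' (by norm_num : (0:ℝ) ≤ 1) hcont h0
  refine ⟨x, ⟨hx.1.le, hx.2⟩, ?_⟩
  have e1 := gs15 x (n - 1)
  have e2 := gs15 x n
  rw [pFG15, ← e1, ← e2]
  simp only [hq] at hqx
  linear_combination (1 - x) * hqx

open Filter Topology

theorem stmt15 :
    (∀ n : ℕ, 1 ≤ n →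
      ∃! x : ℝ, x ∈ Set.Ico (0 : ℝ) 1 ∧ x ^ (2 * n) - x ^ n - x ^ (n - 1) + 1 = 0) ∧
    ∀ L : ℕ → ℝ,
      (∀ n, 1 ≤ n → L n ∈ Set.Ico (0 : ℝ) 1 ∧
        (L n) ^ (2 * n) - (L n) ^ n - (L n) ^ (n - 1) + 1 = 0) →
      (∀ n, 1 ≤ n → ∀ x ∈ Set.Ioo (L n) 1, x ^ (2 * n) - x ^ n - x ^ (n - 1) + 1 < 0) ∧
      StrictMonoOn L (Set.Ici 1) ∧
      Tendsto L atTop (𝓝 1) := by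
  -- helper: the n = 1 polynomial forces root 0
  have h1root : ∀ y : ℝ, y ∈ Set.Ico (0:ℝ) 1 →
      y ^ (2 * 1) - y ^ 1 - y ^ (1 - 1) + 1 = 0 → y = 0 := by
    intro y hy hpy
    norm_num at hpy
    have h : y * (y - 1) = 0 := by nlinarith [hpy]
    rcases mul_eq_zero.mp h with h | h
    · exact h
    · exfalso; have := hy.2; linarith
  constructor
  · intro n hn
    rcases eq_or_lt_of_le hn with h1 | h2
    · -- n = 1
      subst h1
      refine ⟨0, ⟨⟨le_refl _, zero_lt_one⟩, by norm_num⟩, ?_⟩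
      rintro y ⟨hy, hpy⟩
      exact h1root y hy hpy
    · -- n ≥ 2
      obtain ⟨x, hx, hpx⟩ := exist15 n h2
      exact ⟨x, ⟨hx, hpx⟩, fun y ⟨hy, hpy⟩ => uniq15 n h2 hy hx hpy hpx⟩
  · intro L hL
    have hL1 : L 1 = 0 := h1root (L 1) (hL 1 le_rfl).1 (hL 1 le_rfl).2
    have hpos : ∀ n, 2 ≤ n → 0 < L n := by
      intro n hn
      rcases (hL n (by omega)).1.1.lt_or_eq with h | h
      · exact h
      · exfalso
        have := (hL n (by omega)).2
        rw [← h, p0_15 n hn] at this; norm_num at this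
    -- sign claim
    have hsign : ∀ n, 1 ≤ n → ∀ x ∈ Set.Ioo (L n) 1,
        x ^ (2 * n) - x ^ n - x ^ (n - 1) + 1 < 0 := by
      intro n hn x hx
      rcases eq_or_lt_of_le hn with h1 | h2
      · subst h1
        norm_num
        have hx0 : 0 < x := by rw [← hL1]; exact hx.1
        nlinarith [hx.2, hx0]
      · exact sign15 n h2 (hpos n h2) (hL n (by omega)).1.2 (hL n (by omega)).2 hx.1 hx.2
    refine ⟨hsign, ?_, ?_⟩
    · -- strict monotonicity
      have hadj : ∀ n, 1 ≤ n → L n < L (n + 1) := by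
        intro n hn
        rcases eq_or_lt_of_le hn with h1 | h2
        · -- n = 1 : L 1 = 0 < L 2
          rw [← h1, hL1]; exact hpos 2 le_rfl
        · -- n ≥ 2
          set x := L n with hxdef
          have hx0 : 0 < x := hpos n h2
          have hx1 : x < 1 := (hL n (by omega)).1.2
          have hpx : x ^ (2 * n) - x ^ n - x ^ (n - 1) + 1 = 0 := (hL n (by omega)).2
          -- p_{n+1}(x) > 0
          have hFn : x ^ n * (1 - x ^ n) = 1 - x ^ (n - 1) := by
            have := pFG15 n x; rw [hpx] at this; linarith
          have hGn : 0 < 1 - x ^ (n - 1) := by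
            have := pow_lt_one₀ hx0.le hx1 (n := n - 1) (by omega); linarith
          have hk := key2FG15 n h2 hx0 hx1
          rw [hFn] at hk
          have hstep : x ^ (n + 1) * (1 - x ^ (n + 1)) < 1 - x ^ n := by
            nlinarith [hk, hGn]
          have hppos : 0 < x ^ (2 * (n + 1)) - x ^ (n + 1) - x ^ ((n + 1) - 1) + 1 := by
            rw [pFG15]
            have : (n + 1) - 1 = n := by omega
            rw [this]; linarith
          -- conclude x < L (n+1)
          have hbnd := hL (n + 1) (by omega)
          rcases lt_trichotomy x (L (n + 1)) with h | h | h
          · exact h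
          · exfalso; rw [h] at hppos; rw [hbnd.2] at hppos; norm_num at hppos
          · exfalso
            have := hsign (n + 1) (by omega) x ⟨h, hx1⟩
            linarith
      intro m hm n hn hmn
      have : ∀ k, m < k → L m < L k := by
        intro k hk
        induction k with
        | zero => omega
        | succ p ih =>
          rcases Nat.lt_succ_iff_lt_or_eq.mp hk with h | h
          · exact (ih h).trans (hadj p (by omega))
          · rw [← h]; exact hadj m hm
      exact this n hmn
    · -- convergence to 1
      rw [tendsto_order]
      constructor
      · intro a ha
        by_cases h : 0 ≤ a
        · have htend : Tendsto (fun n : ℕ => a ^ (n - 1)) atTop (𝓝 0) :=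
            (tendsto_pow_atTop_nhds_zero_of_lt_one h ha).comp (tendsto_sub_atTop_nat 1)
          have hev : ∀ᶠ n in atTop, a ^ (n - 1) < 1 / 2 :=
            htend.eventually (eventually_lt_nhds (by norm_num))
          filter_upwards [hev, eventually_ge_atTop 2] with n hpn hn2
          by_contra hc
          push_neg at hc
          have hlt : a < 1 := ha
          have han : a ^ n ≤ a ^ (n - 1) :=
            pow_le_pow_of_le_one h hlt.le (by omega)
          have hpa : 0 < a ^ (2 * n) - a ^ n - a ^ (n - 1) + 1 := by
            nlinarith [pow_nonneg h (2 * n), han, hpn]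
          rcases hc.lt_or_eq with hlt2 | heq
          · have := hsign n (by omega) a ⟨hlt2, hlt⟩; linarith
          · have := (hL n (by omega)).2; rw [heq] at this; linarith
        · push_neg at h
          filter_upwards [eventually_ge_atTop 1] with n hn
          exact h.trans_le (hL n hn).1.1
      · intro a ha
        filter_upwards [eventually_ge_atTop 1] with n hn
        exact (hL n hn).1.2.trans ha
end

section
/- For each n ≥ 0, the polynomial p_n(x) = x^{4n+4} - x^{3n+3} + x^{2n+2} - x^{2n+1} - x^{n+1} + 1 has exactly one root γ_n in [0,1); moreover p_n(x) < 0 for all x ∈ (γ_n, 1), the sequence (γ_n) is strictly increasing, and γ_n → 1 as n → ∞. -/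
open Filter Topology Finset

private def S16 (n : ℕ) (x : ℝ) : ℝ := ∑ i ∈ Finset.range (n + 1), x ^ i

private def P16 (n : ℕ) (x : ℝ) : ℝ :=
  x ^ (4 * n + 4) - x ^ (3 * n + 3) + x ^ (2 * n + 2) - x ^ (2 * n + 1) - x ^ (n + 1) + 1

private noncomputable def R16 (n : ℕ) (x : ℝ) : ℝ :=
  x ^ (n + 2) * S16 n x + 1 - x⁻¹ ^ (n + 1) * S16 n x⁻¹

private lemma S16_one_le {n : ℕ} {x : ℝ} (hx : 0 ≤ x) : 1 ≤ S16 n x := by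
  have h0 : (0 : ℕ) ∈ Finset.range (n + 1) := by simp
  calc (1 : ℝ) = x ^ 0 := by simp
  _ ≤ S16 n x := Finset.single_le_sum (fun i _ => pow_nonneg hx i) h0

private lemma S16_nonneg {n : ℕ} {x : ℝ} (hx : 0 ≤ x) : 0 ≤ S16 n x :=
  le_trans zero_le_one (S16_one_le hx)

private lemma S16_gs (n : ℕ) (x : ℝ) : S16 n x * (x - 1) = x ^ (n + 1) - 1 :=
  geom_sum_mul x (n + 1)

private lemma S16_le {n : ℕ} {x y : ℝ} (hx : 0 ≤ x) (hxy : x ≤ y) : S16 n x ≤ S16 n y := by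
  unfold S16
  gcongr

private lemma S16_reflect {n : ℕ} {x : ℝ} (hx : x ≠ 0) : x ^ n * S16 n x⁻¹ = S16 n x := by
  unfold S16
  rw [Finset.mul_sum, ← Finset.sum_range_reflect (fun i => x ^ i) (n + 1)]
  refine Finset.sum_congr rfl fun i hi => ?_
  rw [Finset.mem_range] at hi
  rw [inv_pow, show n + 1 - 1 - i = n - i by omega, eq_comm]
  field_simp
  rw [← pow_add]
  congr 1
  omega

private lemma P16_eq {n : ℕ} {x : ℝ} (hx : x ≠ 0) :
    P16 n x = (x - 1) * (x ^ (2 * n + 1) * R16 n x) := by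
  have h1 := S16_gs n x
  have h4 : x ^ (n + 1) * x⁻¹ ^ (n + 1) = 1 := by
    rw [← mul_pow, mul_inv_cancel₀ hx, one_pow]
  have hr := S16_reflect (n := n) hx
  unfold P16 R16
  linear_combination (1 - x ^ (3 * n + 3)) * h1 +
    ((x - 1) * x ^ n * S16 n x⁻¹) * h4 + (x - 1) * hr

private lemma R16_lt {n : ℕ} {x y : ℝ} (hx : 0 < x) (hxy : x < y) : R16 n x < R16 n y := by
  have hy : 0 < y := hx.trans hxy
  have hA : x ^ (n + 2) * S16 n x < y ^ (n + 2) * S16 n y := by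
    have h1 : x ^ (n + 2) < y ^ (n + 2) := pow_lt_pow_left₀ hxy hx.le (by omega)
    have h2 : S16 n x ≤ S16 n y := S16_le hx.le hxy.le
    have h3 : (0 : ℝ) < x ^ (n + 2) := pow_pos hx _
    nlinarith [S16_one_le (n := n) hx.le]
  have hB : y⁻¹ ^ (n + 1) * S16 n y⁻¹ ≤ x⁻¹ ^ (n + 1) * S16 n x⁻¹ := by
    have hyx : y⁻¹ ≤ x⁻¹ := by
      apply inv_anti₀ hx hxy.le
    have hy0 : (0 : ℝ) ≤ y⁻¹ := by positivity
    have h1 : y⁻¹ ^ (n + 1) ≤ x⁻¹ ^ (n + 1) := pow_le_pow_left₀ hy0 hyx _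
    have h2 : S16 n y⁻¹ ≤ S16 n x⁻¹ := S16_le hy0 hyx
    have h3 : (0 : ℝ) ≤ S16 n y⁻¹ := S16_nonneg hy0
    exact mul_le_mul h1 h2 h3 (pow_nonneg (by positivity) _)
  unfold R16
  linarith

private lemma R16_succ_lt {n : ℕ} {x : ℝ} (hx : 0 < x) (hx1 : x < 1) :
    R16 (n + 1) x < R16 n x := by
  have hxne : x ≠ 0 := hx.ne'
  have h4 : ∀ m : ℕ, x ^ m * x⁻¹ ^ m = 1 := fun m => by
    rw [← mul_pow, mul_inv_cancel₀ hxne, one_pow]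
  have hS1 : S16 (n + 1) x = S16 n x + x ^ (n + 1) := Finset.sum_range_succ _ _
  have hS2 : S16 (n + 1) x⁻¹ = S16 n x⁻¹ + x⁻¹ ^ (n + 1) := Finset.sum_range_succ _ _
  have h1 := S16_gs n x
  have h2 := S16_gs n x⁻¹
  have key : R16 (n + 1) x - R16 n x =
      (x ^ (2 * n + 3) + x ^ (2 * n + 4) - x ^ (n + 2)) -
        (x⁻¹ ^ (2 * n + 2) + x⁻¹ ^ (2 * n + 3) - x⁻¹ ^ (n + 1)) := by
    unfold R16
    rw [hS1, hS2]
    linear_combination x ^ (n + 2) * h1 - x⁻¹ ^ (n + 1) * h2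
  have hb : (0 : ℝ) < x ^ (2 * n + 3) := pow_pos hx _
  have hmul : x ^ (2 * n + 3) * (x ^ (2 * n + 3) + x ^ (2 * n + 4) - x ^ (n + 2)) <
      x ^ (2 * n + 3) * (x⁻¹ ^ (2 * n + 2) + x⁻¹ ^ (2 * n + 3) - x⁻¹ ^ (n + 1)) := by
    have e2 : x ^ (2 * n + 3) * (x⁻¹ ^ (2 * n + 2) + x⁻¹ ^ (2 * n + 3) - x⁻¹ ^ (n + 1)) =
        x + 1 - x ^ (n + 2) := by
      linear_combination x * h4 (2 * n + 2) + h4 (2 * n + 3) - x ^ (n + 2) * h4 (n + 1)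
    rw [e2]
    have ea : x ^ (2 * n + 3) * (x ^ (2 * n + 3) + x ^ (2 * n + 4) - x ^ (n + 2)) =
        x ^ (2 * n + 3) * x ^ (2 * n + 3) + x ^ (2 * n + 3) * x ^ (2 * n + 3) * x -
          x ^ (n + 2) * x ^ (2 * n + 3) := by ring
    rw [ea]
    have ha1 : x ^ (n + 2) < 1 := pow_lt_one₀ hx.le hx1 (by omega)
    have hb1 : x ^ (2 * n + 3) < 1 := pow_lt_one₀ hx.le hx1 (by omega)
    have ha0 : (0 : ℝ) < x ^ (n + 2) := pow_pos hx _
    nlinarith [mul_pos (sub_pos.2 hb1)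
      (show (0 : ℝ) < (1 + x) * (1 + x ^ (2 * n + 3)) - x ^ (n + 2) by nlinarith)]
  have hfin := lt_of_mul_lt_mul_left hmul hb.le
  linarith

private lemma P16_zero (n : ℕ) : P16 n 0 = 1 := by
  have z : ∀ m : ℕ, m ≠ 0 → (0 : ℝ) ^ m = 0 := fun m hm => zero_pow hm
  unfold P16
  rw [z (4 * n + 4) (by omega), z (3 * n + 3) (by omega), z (2 * n + 2) (by omega),
    z (2 * n + 1) (by omega), z (n + 1) (by omega)]
  norm_num

private lemma root16 {n : ℕ} {x : ℝ} (hx : x ∈ Set.Ico (0 : ℝ) 1) (hP : P16 n x = 0) :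
    0 < x ∧ R16 n x = 0 := by
  obtain ⟨hx0, hx1⟩ := hx
  have hxpos : 0 < x := by
    rcases hx0.lt_or_eq with h | h
    · exact h
    · exfalso; rw [← h, P16_zero] at hP; norm_num at hP
  refine ⟨hxpos, ?_⟩
  have h := (P16_eq (n := n) hxpos.ne').symm.trans hP
  rcases mul_eq_zero.1 h with h' | h'
  · exact absurd h' (by intro hc; linarith [sub_eq_zero.1 hc])
  rcases mul_eq_zero.1 h' with h'' | h''
  · exact absurd h'' (pow_ne_zero _ hxpos.ne')
  · exact h''

private lemma exists_neg16 (n : ℕ) : ∃ x ∈ Set.Ioo (0 : ℝ) 1, P16 n x < 0 := by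
  have hS : Continuous (S16 n) := by
    unfold S16; exact continuous_finset_sum _ fun i _ => continuous_pow i
  have hc : ContinuousAt (R16 n) 1 := by
    unfold R16
    have hinv : ContinuousAt (fun x : ℝ => x⁻¹) 1 := continuousAt_inv₀ one_ne_zero
    exact (((continuous_pow (n + 2)).continuousAt.mul hS.continuousAt).add
      continuousAt_const).sub ((hinv.pow (n + 1)).mul (hS.continuousAt.comp hinv))
  have h1 : R16 n 1 = 1 := by unfold R16 S16; simp
  have h2 : ∀ᶠ x in 𝓝 (1 : ℝ), 0 < R16 n x :=
    hc.eventually (eventually_gt_nhds (by rw [h1]; norm_num))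
  have h3 : Set.Ioo (0 : ℝ) 1 ∈ 𝓝[<] (1 : ℝ) :=
    Ioo_mem_nhdsLT_of_mem ⟨one_pos, le_refl 1⟩
  obtain ⟨x, hR, hx⟩ := ((h2.filter_mono nhdsWithin_le_nhds).and
    (eventually_of_mem h3 fun x hx => hx)).exists
  refine ⟨x, hx, ?_⟩
  rw [P16_eq (n := n) hx.1.ne']
  exact mul_neg_of_neg_of_pos (by linarith [hx.2]) (mul_pos (pow_pos hx.1 _) hR)

private lemma exists_root16 (n : ℕ) : ∃ x ∈ Set.Ico (0 : ℝ) 1, P16 n x = 0 := by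
  obtain ⟨x₀, hx₀, hneg⟩ := exists_neg16 n
  have hcont : ContinuousOn (P16 n) (Set.Icc 0 x₀) := by
    unfold P16; fun_prop
  have hmem : (0 : ℝ) ∈ Set.Icc (P16 n x₀) (P16 n 0) :=
    ⟨hneg.le, by rw [P16_zero]; norm_num⟩
  obtain ⟨c, hc, hPc⟩ := intermediate_value_Icc' hx₀.1.le hcont hmem
  exact ⟨c, ⟨hc.1, lt_of_le_of_lt hc.2 hx₀.2⟩, hPc⟩

theorem stmt16 :
    (∀ n : ℕ,
      ∃! x : ℝ, x ∈ Set.Ico (0 : ℝ) 1 ∧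
        x ^ (4 * n + 4) - x ^ (3 * n + 3) + x ^ (2 * n + 2) - x ^ (2 * n + 1) - x ^ (n + 1) + 1 = 0) ∧
    ∀ G : ℕ → ℝ,
      (∀ n, G n ∈ Set.Ico (0 : ℝ) 1 ∧
        (G n) ^ (4 * n + 4) - (G n) ^ (3 * n + 3) + (G n) ^ (2 * n + 2) -
          (G n) ^ (2 * n + 1) - (G n) ^ (n + 1) + 1 = 0) →
      (∀ n, ∀ x ∈ Set.Ioo (G n) 1,
        x ^ (4 * n + 4) - x ^ (3 * n + 3) + x ^ (2 * n + 2) - x ^ (2 * n + 1) - x ^ (n + 1) + 1 < 0) ∧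
      StrictMono G ∧
      Tendsto G atTop (𝓝 1) := by
  constructor
  · intro n
    obtain ⟨c, hc, hPc⟩ := exists_root16 n
    refine ⟨c, ⟨hc, hPc⟩, ?_⟩
    rintro y ⟨hy, hPy⟩
    obtain ⟨hy0, hRy⟩ := root16 hy hPy
    obtain ⟨hc0, hRc⟩ := root16 hc hPc
    rcases lt_trichotomy y c with h | h | h
    · have := R16_lt (n := n) hy0 h
      rw [hRy, hRc] at this; exact absurd this (lt_irrefl 0)
    · exact h
    · have := R16_lt (n := n) hc0 h
      rw [hRy, hRc] at this; exact absurd this (lt_irrefl 0)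
  · intro G hG
    have hroot : ∀ n, 0 < G n ∧ R16 n (G n) = 0 := fun n => root16 (hG n).1 (hG n).2
    refine ⟨?_, ?_, ?_⟩
    · intro n x hx
      have hR : 0 < R16 n x := by
        have := R16_lt (n := n) (hroot n).1 hx.1
        rw [(hroot n).2] at this; exact this
      have hxpos : 0 < x := lt_trans (hroot n).1 hx.1
      show P16 n x < 0
      rw [P16_eq (n := n) hxpos.ne']
      exact mul_neg_of_neg_of_pos (by linarith [hx.2]) (mul_pos (pow_pos hxpos _) hR)
    · apply strictMono_nat_of_lt_succ
      intro n
      by_contra h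
      push_neg at h
      have h5 := R16_succ_lt (n := n) (hroot n).1 (hG n).1.2
      rw [(hroot n).2] at h5
      rcases h.lt_or_eq with h' | h'
      · have := R16_lt (n := n + 1) (hroot (n + 1)).1 h'
        rw [(hroot (n + 1)).2] at this
        linarith
      · rw [← h', (hroot (n + 1)).2] at h5
        linarith
    · rw [tendsto_order]
      constructor
      · intro a ha
        rcases le_or_gt a 0 with h0 | h0
        · exact Eventually.of_forall fun n => lt_of_le_of_lt h0 (hroot n).1
        · have hainv : 1 < a⁻¹ := (one_lt_inv₀ h0).2 ha
          have htend : Tendsto (fun n : ℕ => a⁻¹ ^ (n + 1)) atTop atTop :=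
            (tendsto_pow_atTop_atTop_of_one_lt hainv).comp (tendsto_add_atTop_nat 1)
          filter_upwards [htend.eventually_gt_atTop (1 / (1 - a) + 1)] with n hn
          by_contra hle
          push_neg at hle
          have hRle : R16 n (G n) ≤ R16 n a := by
            rcases hle.lt_or_eq with h' | h'
            · exact (R16_lt (hroot n).1 h').le
            · rw [h']
          rw [(hroot n).2] at hRle
          have hS1 : S16 n a * (1 - a) = 1 - a ^ (n + 1) := by
            linear_combination -S16_gs n a
          have hSle : S16 n a ≤ 1 / (1 - a) := by
            rw [le_div_iff₀ (by linarith)]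
            nlinarith [pow_nonneg h0.le (n + 1)]
          have hA : a ^ (n + 2) * S16 n a ≤ 1 / (1 - a) := by
            have h6 : a ^ (n + 2) * S16 n a ≤ 1 * S16 n a :=
              mul_le_mul_of_nonneg_right (pow_le_one₀ h0.le ha.le) (S16_nonneg h0.le)
            rw [one_mul] at h6
            linarith
          have hB : a⁻¹ ^ (n + 1) ≤ a⁻¹ ^ (n + 1) * S16 n a⁻¹ :=
            le_mul_of_one_le_right (pow_nonneg (by positivity) _) (S16_one_le (by positivity))
          have : R16 n a < 0 := by unfold R16; linarith
          linarith
      · intro a ha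
        exact Eventually.of_forall fun n => lt_trans (hG n).1.2 ha
end

section
/- For each n ≥ 1 with q_n(x) = x^{2n-1} + ⋯ + xⁿ - x^{n-2} - ⋯ - 1 and λ_{n+1} the unique root of q_{n+1} in (0,1): q_n(λ_{n+1}) = λ_{n+1}^{n-1}(1 + λ_{n+1} - λ_{n+1}^{n+1} - λ_{n+1}^{n+2}) > 0. -/
theorem stmt17 (n : ℕ) (hn : 1 ≤ n) (μ : ℝ) (hμ : μ ∈ Set.Ioo (0 : ℝ) 1)
    (hroot : (∑ j ∈ Finset.Icc (n + 1) (2 * n + 1), μ ^ j) - ∑ j ∈ Finset.range n, μ ^ j = 0) :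
    (∑ j ∈ Finset.Icc n (2 * n - 1), μ ^ j) - (∑ j ∈ Finset.range (n - 1), μ ^ j)
      = μ ^ (n - 1) * (1 + μ - μ ^ (n + 1) - μ ^ (n + 2)) ∧
    0 < (∑ j ∈ Finset.Icc n (2 * n - 1), μ ^ j) - ∑ j ∈ Finset.range (n - 1), μ ^ j := by
  obtain ⟨m, rfl⟩ : ∃ m, n = m + 1 := ⟨n - 1, (Nat.succ_pred_eq_of_pos hn).symm⟩
  obtain ⟨hμ0, hμ1⟩ := hμ
  have hne : μ ≠ 1 := ne_of_lt hμ1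
  have hsub : μ - 1 ≠ 0 := sub_ne_zero.mpr hne
  have e1 : 2 * (m + 1) + 1 = (2 * m + 4) - 1 := by omega
  have e2 : 2 * (m + 1) - 1 = (2 * m + 2) - 1 := by omega
  rw [e1, ← Finset.Ico_add_one_right_eq_Icc] at hroot
  rw [e2, ← Finset.Ico_add_one_right_eq_Icc]
  have h1 : 2*m+4-1+1 = 2*m+4 := by omega
  have h2 : 2*m+2-1+1 = 2*m+2 := by omega
  rw [h1, geom_sum_Ico hne (by omega), geom_sum_eq hne] at hroot
  rw [h2, geom_sum_Ico hne (by omega), geom_sum_eq hne]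
  have hr : μ ^ (2*m+4) - μ ^ (m+2) - μ ^ (m+1) + 1 = 0 := by
    field_simp at hroot
    linarith
  have key : (μ ^ (2*m+2) - μ ^ (m+1)) / (μ - 1) - (μ ^ (m+1-1) - 1) / (μ - 1)
      = μ ^ (m+1-1) * (1 + μ - μ ^ (m+1+1) - μ ^ (m+1+2)) := by
    have : m + 1 - 1 = m := by omega
    rw [this]
    field_simp
    linear_combination hr
  refine ⟨key, ?_⟩
  rw [key]
  have hm2 : μ ^ (m+1+1) < 1 := pow_lt_one₀ hμ0.le hμ1 (by omega)
  have hm3 : μ ^ (m+1+2) < μ := by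
    calc μ ^ (m+1+2) = μ ^ (m+1+1) * μ := by ring
    _ < 1 * μ := by nlinarith
    _ = μ := one_mul μ
  have := pow_pos hμ0 (m+1-1)
  nlinarith
end

section
/- Let T be a map on a compact set K that is continuous and uniformly contracting on each connected component Y₁,…,Y_m of K ∖ S_n, where S_n is a finite union of lines, and suppose T maps each component Y_i into some component Y_{j(i)}. Then the ω-limit set of T consists of at most m points; in particular it is finite. -/
theorem stmt19 {X : Type*} [MetricSpace X] (K : Set X) (hK : IsCompact K)
    (m : ℕ) (Y : Fin m → Set X) (T : X → X) (j : Fin m → Fin m) (ρ : ℝ)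
    (hρ0 : 0 ≤ ρ) (hρ1 : ρ < 1)
    (hYK : ∀ i, Y i ⊆ K)
    (hmap : ∀ i, T '' Y i ⊆ Y (j i))
    (hcontr : ∀ i, ∀ x ∈ Y i, ∀ y ∈ Y i, dist (T x) (T y) ≤ ρ * dist x y) :
    ∃ F : Set X, F.Finite ∧ F.ncard ≤ m ∧
      omegaLimit Filter.atTop (fun n (x : X) => T^[n] x) (⋃ i, Y i) ⊆ F := by
  classical
  by_cases hX : Nonempty X
  swap
  · refine ⟨∅, Set.finite_empty, by simp, fun y _ => absurd ⟨y⟩ hX⟩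
  set D := Metric.diam K with hDdef
  have hD0 : 0 ≤ D := Metric.diam_nonneg
  have hDle : ∀ x ∈ K, ∀ y ∈ K, dist x y ≤ D := fun x hx y hy =>
    Metric.dist_le_diam_of_mem hK.isBounded hx hy
  -- iterates stay in components
  have hiter : ∀ n (i : Fin m), ∀ x ∈ Y i, T^[n] x ∈ Y (j^[n] i) := by
    intro n
    induction n with
    | zero => intro i x hx; simpa using hx
    | succ n ih =>
      intro i x hx
      rw [Function.iterate_succ_apply, Function.iterate_succ_apply]
      exact ih (j i) (T x) (hmap i ⟨x, hx, rfl⟩)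
  -- iterated contraction
  have hcontr' : ∀ n (i : Fin m), ∀ x ∈ Y i, ∀ y ∈ Y i,
      dist (T^[n] x) (T^[n] y) ≤ ρ ^ n * dist x y := by
    intro n
    induction n with
    | zero => intro i x hx y hy; simp
    | succ n ih =>
      intro i x hx y hy
      rw [Function.iterate_succ_apply, Function.iterate_succ_apply]
      calc dist (T^[n] (T x)) (T^[n] (T y)) ≤ ρ ^ n * dist (T x) (T y) :=
            ih (j i) _ (hmap i ⟨x, hx, rfl⟩) _ (hmap i ⟨y, hy, rfl⟩)
        _ ≤ ρ ^ n * (ρ * dist x y) :=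
            mul_le_mul_of_nonneg_left (hcontr i x hx y hy) (pow_nonneg hρ0 n)
        _ = ρ ^ (n + 1) * dist x y := by ring
  set Good : Fin m → Prop := fun c => (∃ p, 0 < p ∧ j^[p] c = c) ∧ (Y c).Nonempty with hGoodDef
  -- key: canonical limit point for each good component
  have key : ∀ c : Fin m, Good c →
      ∃ z : X, ∀ (e : ℕ) (w : X), w ∈ Y c → j^[e] c = c → dist (T^[e] w) z ≤ ρ ^ e * D := by
    rintro c ⟨⟨p, hp0, hpc⟩, b, hb⟩
    have hkp : ∀ k, j^[k * p] c = c := by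
      intro k; induction k with
      | zero => simp
      | succ k ih =>
        have : (k + 1) * p = p + k * p := by ring
        rw [this, Function.iterate_add_apply, ih, hpc]
    have hu_mem : ∀ k, T^[k * p] b ∈ Y c := fun k => by
      have := hiter (k * p) c b hb; rwa [hkp k] at this
    set u : ℕ → X := fun k => T^[k * p] b with hu
    have huk : ∀ k, u k ∈ K := fun k => hYK c (hu_mem k)
    have hcauchy : CauchySeq u := by
      apply cauchySeq_of_le_geometric (ρ ^ p) D (pow_lt_one₀ hρ0 hρ1 hp0.ne')
      intro k
      have h1 : u (k + 1) = T^[k * p] (T^[p] b) := by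
        show T^[(k+1) * p] b = _
        rw [show (k + 1) * p = k * p + p by ring, Function.iterate_add_apply]
      have hTb : T^[p] b ∈ Y c := by simpa using hu_mem 1
      calc dist (u k) (u (k + 1)) = dist (T^[k * p] b) (T^[k * p] (T^[p] b)) := by rw [h1]
        _ ≤ ρ ^ (k * p) * dist b (T^[p] b) := hcontr' (k * p) c b hb _ hTb
        _ ≤ ρ ^ (k * p) * D :=
            mul_le_mul_of_nonneg_left (hDle b (hYK c hb) _ (hYK c hTb)) (pow_nonneg hρ0 _)
        _ = D * (ρ ^ p) ^ k := by rw [← pow_mul, Nat.mul_comm p k, mul_comm]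
    obtain ⟨z, hzK, hz⟩ := cauchySeq_tendsto_of_isComplete hK.isComplete huk hcauchy
    refine ⟨z, fun e w hw hec => ?_⟩
    have heb : T^[e] b ∈ Y c := by
      have := hiter e c b hb; rwa [hec] at this
    have h1 : ∀ k, dist (T^[e] w) (T^[e] (u k)) ≤ ρ ^ e * D := fun k =>
      (hcontr' e c w hw (u k) (hu_mem k)).trans
        (mul_le_mul_of_nonneg_left (hDle w (hYK c hw) (u k) (huk k)) (pow_nonneg hρ0 e))
    have h2 : ∀ k, dist (T^[e] (u k)) (u k) ≤ ρ ^ (k * p) * D := by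
      intro k
      have he : T^[e] (u k) = T^[k * p] (T^[e] b) := by
        show T^[e] (T^[k*p] b) = _
        rw [← Function.iterate_add_apply, ← Function.iterate_add_apply, Nat.add_comm]
      rw [he]
      exact (hcontr' (k * p) c _ heb b hb).trans
        (mul_le_mul_of_nonneg_left (hDle _ (hYK c heb) b (hYK c hb)) (pow_nonneg hρ0 _))
    have hbound : ∀ k, dist (T^[e] w) (u k) ≤ ρ ^ e * D + ρ ^ (k * p) * D := fun k =>
      (dist_triangle _ (T^[e] (u k)) _).trans (add_le_add (h1 k) (h2 k))
    have hlim1 : Filter.Tendsto (fun k => dist (T^[e] w) (u k)) Filter.atTop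
        (nhds (dist (T^[e] w) z)) := Filter.Tendsto.dist tendsto_const_nhds hz
    have hlim2 : Filter.Tendsto (fun k : ℕ => ρ ^ e * D + ρ ^ (k * p) * D) Filter.atTop
        (nhds (ρ ^ e * D + 0 * D)) := by
      refine Filter.Tendsto.add tendsto_const_nhds (Filter.Tendsto.mul_const D ?_)
      have hrw : ∀ k : ℕ, ρ ^ (k * p) = (ρ ^ p) ^ k := fun k => by
        rw [← pow_mul, Nat.mul_comm]
      simp_rw [hrw]
      exact tendsto_pow_atTop_nhds_zero_of_lt_one (pow_nonneg hρ0 p)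
        (pow_lt_one₀ hρ0 hρ1 hp0.ne')
    have := le_of_tendsto_of_tendsto' hlim1 hlim2 hbound
    simpa using this
  choose q hq using key
  set q' : Fin m → X := fun c => if h : Good c then q c h else Classical.arbitrary X with hq'
  refine ⟨Set.range q', Set.finite_range q', ?_, ?_⟩
  · rw [← Set.image_univ]
    calc (q' '' Set.univ).ncard ≤ (Set.univ : Set (Fin m)).ncard :=
          Set.ncard_image_le Set.finite_univ
      _ = m := by simp [Set.ncard_univ]
  intro y hy
  rw [mem_omegaLimit_iff_frequently] at hy
  have hfreq : ∀ k : ℕ, ∃ nn, k ≤ nn ∧ ∃ x, x ∈ (⋃ i, Y i) ∧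
      dist (T^[nn] x) y < 1 / (k + 1) := by
    intro k
    have h := hy (Metric.ball y (1 / (k + 1))) (Metric.ball_mem_nhds y (by positivity))
    rw [Filter.frequently_atTop] at h
    obtain ⟨nn, hnn, x, hxs, hxb⟩ := h k
    exact ⟨nn, hnn, x, hxs, by simpa [Metric.mem_ball] using hxb⟩
  choose n hn x hxs hxd using hfreq
  have hxi : ∀ k, ∃ i, x k ∈ Y i := fun k => Set.mem_iUnion.mp (hxs k)
  choose i hxY using hxi
  obtain ⟨⟨i₀, c⟩, hfib⟩ := Finite.exists_infinite_fiber (fun k => (i k, j^[n k] (i k)))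
  set S := (fun k => (i k, j^[n k] (i k))) ⁻¹' {(i₀, c)} with hSdef
  have hSinf : S.Infinite := Set.infinite_coe_iff.mp hfib
  have hSi : ∀ k ∈ S, i k = i₀ := fun k hk => congrArg Prod.fst hk
  have hSc : ∀ k ∈ S, j^[n k] (i k) = c := fun k hk => congrArg Prod.snd hk
  obtain ⟨k₁, hk₁⟩ := hSinf.nonempty
  obtain ⟨k₂, hk₂, hk₂gt⟩ := hSinf.exists_gt (n k₁)
  have hnk₂ : n k₁ < n k₂ := lt_of_lt_of_le hk₂gt (hn k₂)
  have hc₁ : j^[n k₁] i₀ = c := by rw [← hSi k₁ hk₁]; exact hSc k₁ hk₁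
  have hc₂ : j^[n k₂] i₀ = c := by rw [← hSi k₂ hk₂]; exact hSc k₂ hk₂
  have hcyc : ∀ {e : ℕ}, n k₁ ≤ e → j^[e] i₀ = c → j^[e - n k₁] c = c := by
    intro e hle hec
    have : e - n k₁ + n k₁ = e := Nat.sub_add_cancel hle
    rw [← hc₁, ← Function.iterate_add_apply, this, hec]
    exact hc₁.symm
  have hGood : Good c := by
    constructor
    · exact ⟨n k₂ - n k₁, Nat.sub_pos_of_lt hnk₂, hcyc hnk₂.le hc₂⟩
    · refine ⟨T^[n k₁] (x k₁), ?_⟩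
      have := hiter (n k₁) (i k₁) (x k₁) (hxY k₁)
      rwa [hSc k₁ hk₁] at this
  set z := q c hGood with hzdef
  have hyz : y = z := by
    have hdist : ∀ ε > (0:ℝ), dist y z < ε := by
      intro ε hε
      have htend : Filter.Tendsto (fun l : ℕ => ρ ^ l * D) Filter.atTop (nhds 0) := by
        simpa using (tendsto_pow_atTop_nhds_zero_of_lt_one hρ0 hρ1).mul_const D
      have hev : ∀ᶠ l in Filter.atTop, ρ ^ l * D < ε / 2 :=
        htend.eventually_lt_const (by linarith)
      obtain ⟨N₁, hN₁⟩ := Filter.eventually_atTop.mp hev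
      obtain ⟨N₂, hN₂⟩ := exists_nat_one_div_lt (show (0:ℝ) < ε / 2 by linarith)
      obtain ⟨k, hkS, hkgt⟩ := hSinf.exists_gt (max (N₁ + n k₁) N₂)
      have hkN₁ : N₁ + n k₁ < k := lt_of_le_of_lt (le_max_left _ _) hkgt
      have hkN₂ : N₂ < k := lt_of_le_of_lt (le_max_right _ _) hkgt
      have hnk : n k₁ ≤ n k := by
        have : n k₁ < k := by omega
        exact le_trans this.le (hn k)
      have hck : j^[n k] i₀ = c := by rw [← hSi k hkS]; exact hSc k hkS
      -- w in Y c
      have hw : T^[n k₁] (x k) ∈ Y c := by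
        have := hiter (n k₁) (i k) (x k) (hxY k)
        rwa [hSi k hkS, hc₁] at this
      have hec : j^[n k - n k₁] c = c := hcyc hnk hck
      have hTe : T^[n k - n k₁] (T^[n k₁] (x k)) = T^[n k] (x k) := by
        rw [← Function.iterate_add_apply, Nat.sub_add_cancel hnk]
      have hzb : dist (T^[n k] (x k)) z ≤ ρ ^ (n k - n k₁) * D := by
        rw [← hTe]; exact hq c hGood _ _ hw hec
      have heN : N₁ ≤ n k - n k₁ := by
        have : k ≤ n k := hn k
        omega
      have h2 : ρ ^ (n k - n k₁) * D < ε / 2 := hN₁ _ heN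
      have h1 : dist y (T^[n k] (x k)) < ε / 2 := by
        have := hxd k
        rw [dist_comm] at this
        refine lt_of_lt_of_le this ?_
        refine le_trans ?_ hN₂.le
        have h01 : (0:ℝ) < (N₂:ℝ) + 1 := by positivity
        apply one_div_le_one_div_of_le h01
        have : (N₂:ℝ) ≤ (k:ℝ) := by exact_mod_cast hkN₂.le
        linarith
      calc dist y z ≤ dist y (T^[n k] (x k)) + dist (T^[n k] (x k)) z := dist_triangle _ _ _
        _ < ε / 2 + ε / 2 := add_lt_add h1 (lt_of_le_of_lt hzb h2)
        _ = ε := by ring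
    have h0 : dist y z ≤ 0 := by
      by_contra h
      push_neg at h
      exact absurd (hdist _ h) (lt_irrefl _)
    exact eq_of_dist_eq_zero (le_antisymm h0 dist_nonneg)
  refine ⟨c, ?_⟩
  show (if h : Good c then q c h else Classical.arbitrary X) = y
  rw [dif_pos hGood]; exact hyz.symm
end
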